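/- Let E be a finite-dimensional real inner product space, γ > 0, and let φ : E → ℝ be lower semicontinuous and γ-weakly convex. Then for every λ ∈ (0, 1/γ): (i) for every x ∈ E the function w ↦ φ(w) + (1/(2λ))‖w − x‖² attains its minimum over E at a unique point, denoted prox_{λφ}(x); (ii) the Moreau envelope φ_λ(x) := min_{w∈E} (φ(w) + (1/(2λ))‖w − x‖²) is differentiable at every x ∈ E with gradient ∇φ_λ(x) = (x − prox_{λφ}(x))/λ. -/

import Mathlib

open scoped RealInnerProductSpace
open Set Metric

lemma norm_combo_sq {E : Type*} [NormedAddCommGroup E] [InnerProductSpace ℝ E]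
    (a b : E) (t : ℝ) :
    ‖(1 - t) • a + t • b‖ ^ 2
      = (1 - t) * ‖a‖ ^ 2 + t * ‖b‖ ^ 2 - t * (1 - t) * ‖a - b‖ ^ 2 := by
  have h1 : ‖a - b‖ ^ 2 = ‖a‖ ^ 2 - 2 * ⟪a, b⟫ + ‖b‖ ^ 2 := norm_sub_sq_real a b
  have h2 : ‖(1 - t) • a + t • b‖ ^ 2 = ⟪(1 - t) • a + t • b, (1 - t) • a + t • b⟫ :=
    (real_inner_self_eq_norm_sq _).symm
  rw [h2]
  simp only [inner_add_left, inner_add_right, real_inner_smul_left, real_inner_smul_right,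
    real_inner_comm b a]
  rw [real_inner_self_eq_norm_sq, real_inner_self_eq_norm_sq]
  linear_combination (t*(1-t)) * h1 - (2*t*(1-t)) * (real_inner_comm b a)

section Main

variable {E : Type*} [NormedAddCommGroup E] [InnerProductSpace ℝ E] [FiniteDimensional ℝ E]

omit [FiniteDimensional ℝ E] in
theorem moreau_key (γ : ℝ) (φ : E → ℝ)
    (hwc : ConvexOn ℝ Set.univ (fun x => φ x + γ / 2 * ‖x‖ ^ 2))
    (lam : ℝ) (hlam0 : 0 < lam)
    (f : E → E → ℝ) (hfdef : f = fun x w => φ w + 1 / (2 * lam) * ‖w - x‖ ^ 2)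
    (x w₁ w₂ : E) (t : ℝ) (ht0 : 0 ≤ t) (ht1 : t ≤ 1) :
    f x ((1 - t) • w₁ + t • w₂)
      ≤ (1 - t) * f x w₁ + t * f x w₂ - (1/lam - γ)/2 * (t * (1 - t)) * ‖w₁ - w₂‖ ^ 2 := by
  have hψ := hwc.2 (mem_univ w₁) (mem_univ w₂) (by linarith : (0:ℝ) ≤ 1 - t) ht0 (by ring)
  simp only at hψ
  have e1 : ‖((1 - t) • w₁ + t • w₂) - x‖ ^ 2
      = (1 - t) * ‖w₁ - x‖ ^ 2 + t * ‖w₂ - x‖ ^ 2 - t * (1 - t) * ‖w₁ - w₂‖ ^ 2 := by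
    have h : ((1 - t) • w₁ + t • w₂) - x = (1 - t) • (w₁ - x) + t • (w₂ - x) := by
      module
    rw [h, norm_combo_sq]
    rw [show (w₁ - x) - (w₂ - x) = w₁ - w₂ by abel]
  have e2 := norm_combo_sq w₁ w₂ t
  subst hfdef
  simp only [smul_eq_mul] at hψ
  simp only
  have heq : (φ ((1 - t) • w₁ + t • w₂) + 1 / (2 * lam) * ‖(1 - t) • w₁ + t • w₂ - x‖ ^ 2)
      - ((1 - t) * (φ w₁ + 1 / (2 * lam) * ‖w₁ - x‖ ^ 2)
        + t * (φ w₂ + 1 / (2 * lam) * ‖w₂ - x‖ ^ 2)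
        - (1/lam - γ)/2 * (t * (1 - t)) * ‖w₁ - w₂‖ ^ 2)
      = (φ ((1 - t) • w₁ + t • w₂) + γ / 2 * ‖(1 - t) • w₁ + t • w₂‖ ^ 2)
        - ((1 - t) * (φ w₁ + γ / 2 * ‖w₁‖ ^ 2) + t * (φ w₂ + γ / 2 * ‖w₂‖ ^ 2)) := by
    linear_combination (1/(2*lam)) * e1 - (γ/2) * e2
  linarith [heq, hψ]

theorem moreau_exists (γ : ℝ) (hγ : 0 < γ) (φ : E → ℝ)
    (hwc : ConvexOn ℝ Set.univ (fun x => φ x + γ / 2 * ‖x‖ ^ 2))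
    (lam : ℝ) (hlam0 : 0 < lam) (hlam1 : lam < 1 / γ)
    (f : E → E → ℝ) (hfdef : f = fun x w => φ w + 1 / (2 * lam) * ‖w - x‖ ^ 2)
    (x : E) : ∃ p, IsMinOn (f x) Set.univ p := by
  obtain ⟨c, hcdef⟩ : ∃ c : ℝ, c = 1/lam - γ := ⟨_, rfl⟩
  have hc : 0 < c := by
    have h1 : lam * γ < 1 := (lt_div_iff₀ hγ).mp hlam1
    have h2 : γ < 1 / lam := (lt_div_iff₀ hlam0).mpr (by linarith [mul_comm lam γ])
    rw [hcdef]; linarith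
  -- φ is continuous
  have hψcont : Continuous (fun x => φ x + γ / 2 * ‖x‖ ^ 2) := by
    have := hwc.continuousOn isOpen_univ
    rwa [← continuousOn_univ]
  have hφcont : Continuous φ := by
    have h : Continuous (fun x => (φ x + γ / 2 * ‖x‖ ^ 2) - γ / 2 * ‖x‖ ^ 2) :=
      hψcont.sub (by continuity)
    simpa using h
  have hfc : Continuous (f x) := by
    rw [hfdef]
    exact hφcont.add ((continuous_const.mul (((continuous_id.sub continuous_const).norm).pow 2)))
  obtain ⟨w₀, hw₀mem, hw₀⟩ := (isCompact_closedBall (0:E) 1).exists_isMinOn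
    ⟨0, by simp⟩ hfc.continuousOn
  obtain ⟨A, hA⟩ : ∃ A : ℝ, A = f x w₀ := ⟨_, rfl⟩
  -- coercivity
  have hcoer : ∀ w : E, 1 ≤ ‖w‖ →
      f x 0 + ‖w‖ * (A - f x 0) + c/2 * (‖w‖^2 - ‖w‖) ≤ f x w := by
    intro w hw
    have hwpos : (0:ℝ) < ‖w‖ := lt_of_lt_of_le one_pos hw
    obtain ⟨t, htdef⟩ : ∃ t : ℝ, t = ‖w‖⁻¹ := ⟨_, rfl⟩
    have ht0 : 0 ≤ t := htdef ▸ inv_nonneg.mpr hwpos.le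
    have ht1 : t ≤ 1 := by rw [htdef]; exact inv_le_one_of_one_le₀ hw
    have htw : t * ‖w‖ = 1 := by rw [htdef]; exact inv_mul_cancel₀ (ne_of_gt hwpos)
    have key := moreau_key γ φ hwc lam hlam0 f hfdef x 0 w t ht0 ht1
    rw [← hcdef] at key
    have hmem : (1 - t) • (0:E) + t • w ∈ closedBall (0:E) 1 := by
      simp only [smul_zero, zero_add, mem_closedBall, dist_zero_right, norm_smul,
        Real.norm_eq_abs, abs_of_nonneg ht0]
      rw [htw]
    have hAle : A ≤ f x ((1 - t) • (0:E) + t • w) := hA ▸ isMinOn_iff.mp hw₀ _ hmem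
    rw [show (0:E) - w = -w by abel, norm_neg] at key
    have htw2 : t * ‖w‖^2 = ‖w‖ := by rw [pow_two, ← mul_assoc, htw, one_mul]
    have hkey2 : A ≤ (1 - t) * f x 0 + t * f x w - c/2 * (t*(1-t)) * ‖w‖^2 :=
      le_trans hAle key
    have hstep := mul_le_mul_of_nonneg_left hkey2 hwpos.le
    have hfweq : f x w = ‖w‖ * (t * f x w) := by
      rw [← mul_assoc, mul_comm ‖w‖ t, htw, one_mul]
    have heqw : ‖w‖ * ((1 - t) * f x 0 + t * f x w - c/2 * (t*(1-t)) * ‖w‖^2)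
        = (‖w‖ - 1) * f x 0 + f x w - c/2 * (‖w‖^2 - ‖w‖) := by
      linear_combination (f x w - f x 0 + c/2*‖w‖) * htw - (c/2*(‖w‖ - t*‖w‖)) * htw2
    rw [heqw] at hstep
    nlinarith [hstep]
  -- choose radius
  obtain ⟨R, hRdef⟩ : ∃ R : ℝ, R = max 1 (1 + (2/c) * (|A - f x 0| + 1)) := ⟨_, rfl⟩
  have hR1 : (1:ℝ) ≤ R := hRdef ▸ le_max_left _ _
  have hR0 : (0:ℝ) ≤ R := by linarith
  obtain ⟨p, hpmem, hpmin⟩ := (isCompact_closedBall (0:E) R).exists_isMinOn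
    ⟨0, by simp [hR0]⟩ hfc.continuousOn
  refine ⟨p, isMinOn_iff.mpr fun w _ => ?_⟩
  by_cases hw : w ∈ closedBall (0:E) R
  · exact isMinOn_iff.mp hpmin w hw
  · have hwR : R < ‖w‖ := by
      simpa [mem_closedBall, dist_zero_right] using hw
    have hw1 : 1 ≤ ‖w‖ := le_trans hR1 hwR.le
    have h0mem : (0:E) ∈ closedBall (0:E) R := by simp [hR0]
    have hp0 : f x p ≤ f x 0 := isMinOn_iff.mp hpmin 0 h0mem
    have hco := hcoer w hw1
    have hR2 : 1 + (2/c) * (|A - f x 0| + 1) ≤ R := hRdef ▸ le_max_right _ _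
    have habs : -|A - f x 0| ≤ A - f x 0 := neg_abs_le _
    have hcw : |A - f x 0| + 1 ≤ c/2 * (‖w‖ - 1) := by
      have h3 : (2/c) * (|A - f x 0| + 1) ≤ ‖w‖ - 1 := by linarith
      calc |A - f x 0| + 1 = c/2 * ((2/c) * (|A - f x 0| + 1)) := by
            field_simp
          _ ≤ c/2 * (‖w‖ - 1) := by
            apply mul_le_mul_of_nonneg_left h3 (by linarith)
    have hfin : f x 0 ≤ f x w := by
      nlinarith [hco, habs, hcw, hw1]
    linarith

end Main

/-- For a lower semicontinuous `γ`-weakly convex function `φ` on a finite-dimensional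
real inner product space and `λ ∈ (0, 1/γ)`, the proximal map is well defined (unique
minimizer) and the Moreau envelope `φ_λ` is differentiable with gradient
`∇φ_λ(x) = (x − prox_{λφ}(x))/λ`. -/
theorem moreau_envelope_gradient
    {E : Type*} [NormedAddCommGroup E] [InnerProductSpace ℝ E] [FiniteDimensional ℝ E]
    (γ : ℝ) (hγ : 0 < γ) (φ : E → ℝ)
    (hlsc : LowerSemicontinuous φ)
    (hwc : ConvexOn ℝ Set.univ (fun x => φ x + γ / 2 * ‖x‖ ^ 2))
    (lam : ℝ) (hlam0 : 0 < lam) (hlam1 : lam < 1 / γ) :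
    ∃ prox : E → E,
      (∀ x w : E,
        IsMinOn (fun w' => φ w' + 1 / (2 * lam) * ‖w' - x‖ ^ 2) Set.univ w ↔ w = prox x) ∧
      (∀ x : E,
        HasGradientAt (fun x' => ⨅ w : E, (φ w + 1 / (2 * lam) * ‖w - x'‖ ^ 2))
          (lam⁻¹ • (x - prox x)) x) := by
  classical
  obtain ⟨f, hfdef⟩ : ∃ f : E → E → ℝ, f = fun x w => φ w + 1 / (2 * lam) * ‖w - x‖ ^ 2 :=
    ⟨_, rfl⟩
  obtain ⟨c, hcdef⟩ : ∃ c : ℝ, c = 1/lam - γ := ⟨_, rfl⟩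
  have hc : 0 < c := by
    have h1 : lam * γ < 1 := (lt_div_iff₀ hγ).mp hlam1
    have h2 : γ < 1 / lam := (lt_div_iff₀ hlam0).mpr (by linarith [mul_comm lam γ])
    rw [hcdef]; linarith
  have hlamne : lam ≠ 0 := ne_of_gt hlam0
  have hlaminv : (0:ℝ) < lam⁻¹ := inv_pos.mpr hlam0
  choose p hp using moreau_exists γ hγ φ hwc lam hlam0 hlam1 f hfdef
  -- quadratic growth at the minimizer
  have growth : ∀ x w : E, f x (p x) + c/4 * ‖w - p x‖^2 ≤ f x w := by
    intro x w
    have key := moreau_key γ φ hwc lam hlam0 f hfdef x (p x) w (1/2) (by norm_num) (by norm_num)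
    rw [← hcdef] at key
    have hmin : f x (p x) ≤ f x ((1 - (1/2:ℝ)) • p x + (1/2:ℝ) • w) :=
      isMinOn_iff.mp (hp x) _ (mem_univ _)
    have hnorm : ‖p x - w‖ = ‖w - p x‖ := norm_sub_rev _ _
    rw [hnorm] at key
    linarith [key, hmin]
  -- uniqueness of the minimizer
  have huniq : ∀ x w : E, IsMinOn (f x) Set.univ w → w = p x := by
    intro x w hw
    have h1 := growth x w
    have h2 : f x w ≤ f x (p x) := isMinOn_iff.mp hw _ (mem_univ _)
    have h3 : ‖w - p x‖^2 ≤ 0 := by nlinarith [h1, h2]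
    have h4 : ‖w - p x‖ = 0 := by nlinarith [sq_nonneg ‖w - p x‖, norm_nonneg (w - p x), h3]
    have := norm_sub_eq_zero_iff.mp h4
    exact this
  -- Lipschitz continuity of the prox map
  obtain ⟨L, hLdef⟩ : ∃ L : ℝ, L = 2/(c*lam) := ⟨_, rfl⟩
  have hL0 : 0 < L := by rw [hLdef]; positivity
  have hlip : ∀ x y : E, ‖p y - p x‖ ≤ L * ‖y - x‖ := by
    intro x y
    have hgrow1 := growth x (p y)
    have hgrow2 := growth y (p x)
    have hrev : ‖p x - p y‖ = ‖p y - p x‖ := norm_sub_rev _ _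
    rw [hrev] at hgrow2
    have hchain : (f x (p y) - f x (p x)) + (f y (p x) - f y (p y))
        = (1/lam) * ⟪p y - p x, y - x⟫ := by
      have d1 : ‖p y - x‖^2 - ‖p y - y‖^2 = 2*⟪p y, y - x⟫ + ‖x‖^2 - ‖y‖^2 := by
        simp only [norm_sub_sq_real, inner_sub_right]; ring
      have d2 : ‖p x - x‖^2 - ‖p x - y‖^2 = 2*⟪p x, y - x⟫ + ‖x‖^2 - ‖y‖^2 := by
        simp only [norm_sub_sq_real, inner_sub_right]; ring
      have hs : ⟪p y - p x, y - x⟫ = ⟪p y, y - x⟫ - ⟪p x, y - x⟫ := inner_sub_left _ _ _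
      simp only [hfdef]
      linear_combination (1/(2*lam)) * d1 - (1/(2*lam)) * d2 - (1/lam) * hs
    have hsum : c/2 * ‖p y - p x‖^2 ≤ (1/lam) * ⟪p y - p x, y - x⟫ := by
      linarith [hgrow1, hgrow2, hchain]
    rcases eq_or_lt_of_le (norm_nonneg (p y - p x)) with hD | hD
    · rw [← hD]; positivity
    · have hinner : ⟪p y - p x, y - x⟫ ≤ ‖p y - p x‖ * ‖y - x‖ := real_inner_le_norm _ _
      have h5 : ‖p y - p x‖ * (c/2 * ‖p y - p x‖) ≤ ‖p y - p x‖ * ((1/lam) * ‖y - x‖) := by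
        have hq : (1/lam) * ⟪p y - p x, y - x⟫ ≤ (1/lam) * (‖p y - p x‖ * ‖y - x‖) :=
          mul_le_mul_of_nonneg_left hinner (by positivity)
        calc ‖p y - p x‖ * (c/2 * ‖p y - p x‖) = c/2 * ‖p y - p x‖^2 := by ring
          _ ≤ (1/lam) * ⟪p y - p x, y - x⟫ := hsum
          _ ≤ (1/lam) * (‖p y - p x‖ * ‖y - x‖) := hq
          _ = ‖p y - p x‖ * ((1/lam) * ‖y - x‖) := by ring
      have h6 : c/2 * ‖p y - p x‖ ≤ (1/lam) * ‖y - x‖ := le_of_mul_le_mul_left h5 hD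
      have h7 : (2/c) * (c/2 * ‖p y - p x‖) ≤ (2/c) * ((1/lam) * ‖y - x‖) :=
        mul_le_mul_of_nonneg_left h6 (by positivity)
      calc ‖p y - p x‖ = (2/c) * (c/2 * ‖p y - p x‖) := by
            field_simp
          _ ≤ (2/c) * ((1/lam) * ‖y - x‖) := h7
          _ = L * ‖y - x‖ := by rw [hLdef]; field_simp
  -- the envelope equals the value at the prox
  have hbdd : ∀ x : E, BddBelow (Set.range (fun w => f x w)) := fun x =>
    ⟨f x (p x), by rintro r ⟨w, rfl⟩; exact isMinOn_iff.mp (hp x) w (mem_univ w)⟩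
  have hm : ∀ x : E, (⨅ w : E, f x w) = f x (p x) := fun x =>
    le_antisymm (ciInf_le (hbdd x) (p x)) (le_ciInf fun w => isMinOn_iff.mp (hp x) w (mem_univ w))
  have hfx : ∀ x : E, (fun w' => φ w' + 1 / (2 * lam) * ‖w' - x‖ ^ 2) = f x := by
    intro x; rw [hfdef]
  refine ⟨p, fun x w => ?_, fun x => ?_⟩
  · rw [hfx x]
    exact ⟨huniq x w, fun h => h ▸ hp x⟩
  -- gradient computation
  have hfun : (fun x' => ⨅ w : E, (φ w + 1 / (2 * lam) * ‖w - x'‖ ^ 2))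
      = fun x' => ⨅ w : E, f x' w := by rw [hfdef]
  rw [hfun]
  obtain ⟨g, hgdef⟩ : ∃ g : E, g = lam⁻¹ • (x - p x) := ⟨_, rfl⟩
  rw [← hgdef]
  obtain ⟨C, hCdef⟩ : ∃ C : ℝ, C = 1/(2*lam) + lam⁻¹ * (L + 1) := ⟨_, rfl⟩
  have hC : 0 < C := by rw [hCdef]; positivity
  have hginner : ∀ v : E, ⟪g, v⟫ = lam⁻¹ * ⟪x - p x, v⟫ := by
    intro v; rw [hgdef, real_inner_smul_left]
  -- two-sided bound
  have hbound : ∀ y : E, |(⨅ w : E, f y w) - (⨅ w : E, f x w) - ⟪g, y - x⟫| ≤ C * ‖y - x‖^2 := by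
    intro y
    rw [hm x, hm y]
    have hswap : ⟪p x - x, x - y⟫ = ⟪x - p x, y - x⟫ := by
      rw [show p x - x = -(x - p x) by abel, show x - y = -(y - x) by abel, inner_neg_neg]
    -- upper bound
    have hupper : f y (p y) - f x (p x) - ⟪g, y - x⟫ ≤ 1/(2*lam) * ‖y - x‖^2 := by
      have h1 : f y (p y) ≤ f y (p x) := isMinOn_iff.mp (hp y) _ (mem_univ _)
      have hexp : ‖p x - y‖^2 = ‖p x - x‖^2 + 2*⟪p x - x, x - y⟫ + ‖x - y‖^2 := by
        have := norm_add_sq_real (p x - x) (x - y)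
        rw [show (p x - x) + (x - y) = p x - y by abel] at this
        linarith [this]
      have hnr : ‖x - y‖^2 = ‖y - x‖^2 := by rw [norm_sub_rev]
      have heq1 : f y (p x) - f x (p x) = ⟪g, y - x⟫ + 1/(2*lam) * ‖y - x‖^2 := by
        rw [hginner]
        simp only [hfdef]
        linear_combination (1/(2*lam)) * hexp + lam⁻¹ * hswap + (1/(2*lam)) * hnr
      linarith [h1, heq1]
    -- lower bound
    have hlower : -(C * ‖y - x‖^2) ≤ f y (p y) - f x (p x) - ⟪g, y - x⟫ := by
      have h1 : f x (p x) ≤ f x (p y) := isMinOn_iff.mp (hp x) _ (mem_univ _)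
      have hexp : ‖p y - x‖^2 = ‖p y - y‖^2 + 2*⟪p y - y, y - x⟫ + ‖y - x‖^2 := by
        have := norm_add_sq_real (p y - y) (y - x)
        rw [show (p y - y) + (y - x) = p y - x by abel] at this
        linarith [this]
      have heq2 : f x (p y) - f y (p y) = lam⁻¹ * ⟪p y - y, y - x⟫ + 1/(2*lam) * ‖y - x‖^2 := by
        simp only [hfdef]
        linear_combination (1/(2*lam)) * hexp
      -- so f y (p y) - f x (p x) ≥ -lam⁻¹ * ⟪p y - y, y - x⟫ - 1/(2*lam) * ‖y - x‖^2
      have hv : (p y - y) + (x - p x) = (p y - p x) - (y - x) := by abel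
      have hvin : ⟪p y - y, y - x⟫ + ⟪x - p x, y - x⟫ = ⟪(p y - p x) - (y - x), y - x⟫ := by
        rw [← inner_add_left, hv]
      have hbnd : ⟪(p y - p x) - (y - x), y - x⟫ ≤ (L + 1) * ‖y - x‖^2 := by
        have i1 : ⟪(p y - p x) - (y - x), y - x⟫ ≤ ‖(p y - p x) - (y - x)‖ * ‖y - x‖ :=
          real_inner_le_norm _ _
        have i2 : ‖(p y - p x) - (y - x)‖ ≤ ‖p y - p x‖ + ‖y - x‖ := norm_sub_le _ _
        have i3 := hlip x y
        nlinarith [i1, i2, i3, norm_nonneg (y - x), norm_nonneg (p y - p x)]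
      have hmul : lam⁻¹ * (⟪p y - y, y - x⟫ + ⟪x - p x, y - x⟫) ≤ lam⁻¹ * ((L + 1) * ‖y - x‖^2) := by
        apply mul_le_mul_of_nonneg_left _ hlaminv.le
        rw [hvin]; exact hbnd
      have hmul' : lam⁻¹ * ⟪p y - y, y - x⟫ + lam⁻¹ * ⟪x - p x, y - x⟫
          ≤ lam⁻¹ * (L + 1) * ‖y - x‖^2 := by
        rw [mul_add] at hmul; linarith [hmul]
      rw [hginner, hCdef]
      have hgoal : -((1/(2*lam) + lam⁻¹ * (L + 1)) * ‖y - x‖^2)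
          = -(lam⁻¹ * (L + 1) * ‖y - x‖^2) - 1/(2*lam) * ‖y - x‖^2 := by ring
      rw [hgoal]
      linarith [h1, heq2, hmul']
    have hpos : 0 ≤ lam⁻¹ * (L + 1) * ‖y - x‖^2 := by positivity
    have hCexp : C * ‖y - x‖^2 = 1/(2*lam) * ‖y - x‖^2 + lam⁻¹ * (L + 1) * ‖y - x‖^2 := by
      rw [hCdef]; ring
    rw [abs_le]
    constructor
    · linarith [hlower]
    · linarith [hupper, hpos, hCexp]
  -- conclude
  rw [hasGradientAt_iff_isLittleO, Asymptotics.isLittleO_iff]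
  intro ε hε
  rw [Metric.eventually_nhds_iff]
  refine ⟨ε / C, by positivity, fun y hy => ?_⟩
  rw [dist_eq_norm] at hy
  have hb := hbound y
  have hn : ‖(⨅ w : E, f y w) - (⨅ w : E, f x w) - ⟪g, y - x⟫‖
      = |(⨅ w : E, f y w) - (⨅ w : E, f x w) - ⟪g, y - x⟫| := Real.norm_eq_abs _
  rw [hn]
  have h2 : C * ‖y - x‖^2 ≤ ε * ‖y - x‖ := by
    have h3 : C * ‖y - x‖ ≤ ε := by
      have h4 : C * ‖y - x‖ ≤ C * (ε / C) :=
        mul_le_mul_of_nonneg_left hy.le hC.le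
      have h5 : C * (ε / C) = ε := by field_simp
      linarith
    calc C * ‖y - x‖^2 = (C * ‖y - x‖) * ‖y - x‖ := by ring
      _ ≤ ε * ‖y - x‖ := mul_le_mul_of_nonneg_right h3 (norm_nonneg _)
  calc |(⨅ w : E, f y w) - (⨅ w : E, f x w) - ⟪g, y - x⟫| ≤ C * ‖y - x‖^2 := hb
    _ ≤ ε * ‖y - x‖ := h2
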